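/- arXiv:2105.02356 — 2 statements merged into one kernel-verified Lean document; each statement's English description precedes it below -/
import Mathlib

section
/- Let G be a strongly connected bridgeless mixed multigraph of radius r. Then every edge of G (directed or undirected) lies on a cycle of length at most 2r + 1. -/
/-- A mixed multigraph: a multigraph whose edges are each either directed
(traversable only from `src` to `dst`) or undirected (traversable both ways).
Parallel edges are allowed since `E` is an abstract edge-index type. -/
structure MixedMultigraph where
  V : Type
  E : Type
  [fintV : Fintype V]
  [fintE : Fintype E]
  src : E → V
  dst : E → V
  directed : E → Bool

attribute [instance] MixedMultigraph.fintV MixedMultigraph.fintE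

namespace MixedMultigraph

/-- A dart is a traversal of an edge; an edge may be traversed in reverse
(`rev = true`) only if it is undirected. -/
structure Dart (G : MixedMultigraph) where
  edge : G.E
  rev : Bool
  ok : rev = true → G.directed edge = false

/-- The starting vertex of a dart. -/
def Dart.fst {G : MixedMultigraph} (d : G.Dart) : G.V :=
  if d.rev then G.dst d.edge else G.src d.edge

/-- The ending vertex of a dart. -/
def Dart.snd {G : MixedMultigraph} (d : G.Dart) : G.V :=
  if d.rev then G.src d.edge else G.dst d.edge

/-- A walk from `u` to `v`: a sequence of darts, consecutive ones sharing endpoints. -/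
inductive Walk (G : MixedMultigraph) : G.V → G.V → Type
  | nil (u : G.V) : Walk G u u
  | cons {w : G.V} (d : G.Dart) (p : Walk G d.snd w) : Walk G d.fst w

namespace Walk

variable {G : MixedMultigraph}

/-- The number of edges of a walk. -/
def length {u v : G.V} : G.Walk u v → ℕ
  | .nil _ => 0
  | .cons _ p => p.length + 1

/-- The list of edges traversed by a walk. -/
def edges {u v : G.V} : G.Walk u v → List G.E
  | .nil _ => []
  | .cons d p => d.edge :: p.edges

/-- The list of darts of a walk. -/
def darts {u v : G.V} : G.Walk u v → List G.Dart
  | .nil _ => []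
  | .cons d p => d :: p.darts

/-- The list of vertices visited by a walk (in order, including both ends). -/
def support {u v : G.V} : G.Walk u v → List G.V
  | .nil u => [u]
  | .cons d p => d.fst :: p.support

/-- A path is a walk with no repeated vertices. -/
def IsPath {u v : G.V} (p : G.Walk u v) : Prop := p.support.Nodup

/-- A cycle is a nonempty closed walk with no repeated edges whose only
repeated vertex is its common first and last vertex. -/
def IsCycle {u : G.V} (p : G.Walk u u) : Prop :=
  0 < p.length ∧ p.edges.Nodup ∧ p.support.tail.Nodup

/-- Two vertices are consecutive on a walk if some dart of the walk joins them. -/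
def Consecutive {u v : G.V} (p : G.Walk u v) (x y : G.V) : Prop :=
  ∃ d ∈ p.darts, (d.fst = x ∧ d.snd = y) ∨ (d.fst = y ∧ d.snd = x)

/-- A chord of a cycle: an edge not on the cycle joining two distinct,
non-consecutive vertices of the cycle. -/
def IsChord {u : G.V} (p : G.Walk u u) (e : G.E) : Prop :=
  e ∉ p.edges ∧ G.src e ∈ p.support ∧ G.dst e ∈ p.support ∧
    G.src e ≠ G.dst e ∧ ¬ p.Consecutive (G.src e) (G.dst e)

end Walk

/-- The distance from `u` to `v`: the least length of a walk from `u` to `v`. -/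
noncomputable def dist (G : MixedMultigraph) (u v : G.V) : ℕ :=
  sInf {n | ∃ p : G.Walk u v, p.length = n}

/-- The eccentricity of a vertex `u`. -/
noncomputable def ecc (G : MixedMultigraph) (u : G.V) : ℕ :=
  sSup {n | ∃ v : G.V, n = max (G.dist u v) (G.dist v u)}

/-- The radius: the minimum eccentricity over all vertices. -/
noncomputable def radius (G : MixedMultigraph) : ℕ :=
  sInf {n | ∃ u : G.V, n = G.ecc u}

/-- The diameter: the maximum distance over all ordered pairs of vertices. -/
noncomputable def diam (G : MixedMultigraph) : ℕ :=
  sSup {n | ∃ u v : G.V, n = G.dist u v}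

/-- A mixed multigraph is strongly connected if there is a walk from every
vertex to every other vertex. -/
def StronglyConnected (G : MixedMultigraph) : Prop :=
  ∀ u v : G.V, Nonempty (G.Walk u v)

/-- The mixed multigraph obtained by deleting the edge `e₀`. -/
noncomputable def deleteEdge (G : MixedMultigraph) (e₀ : G.E) : MixedMultigraph :=
  letI := Classical.decEq G.E
  { V := G.V
    E := {e : G.E // e ≠ e₀}
    fintV := G.fintV
    fintE := inferInstance
    src := fun e => G.src e.1
    dst := fun e => G.dst e.1
    directed := fun e => G.directed e.1 }

/-- A mixed multigraph is bridgeless if it has no bridge. A bridge is an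
undirected edge whose removal destroys strong connectivity. -/
def Bridgeless (G : MixedMultigraph) : Prop :=
  ∀ e : G.E, G.directed e = false → (G.deleteEdge e).StronglyConnected

/-- An orientation: each undirected edge is assigned exactly one of its two
directions (`flip e = true` reverses the stored endpoints); directed edges stay. -/
structure Orientation (G : MixedMultigraph) where
  flip : G.E → Bool
  flip_dir : ∀ e : G.E, G.directed e = true → flip e = false

/-- The digraph resulting from an orientation. -/
def Orientation.graph {G : MixedMultigraph} (o : G.Orientation) : MixedMultigraph :=
  { V := G.V
    E := G.E
    fintV := G.fintV
    fintE := G.fintE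
    src := fun e => if o.flip e then G.dst e else G.src e
    dst := fun e => if o.flip e then G.src e else G.dst e
    directed := fun _ => true }

/-- Edge `e` lies on a cycle of length at most `L`. -/
def EdgeOnCycleLE (G : MixedMultigraph) (e : G.E) (L : ℕ) : Prop :=
  ∃ (u : G.V) (p : G.Walk u u), p.IsCycle ∧ e ∈ p.edges ∧ p.length ≤ L

/-- A mixed multigraph is `k`-chordal if every cycle of length more than `k`
has a chord. -/
def KChordal (G : MixedMultigraph) (k : ℕ) : Prop :=
  ∀ (u : G.V) (p : G.Walk u u), p.IsCycle → k < p.length → ∃ e : G.E, p.IsChord e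

/-- The closed neighbourhood `N[u]`: `u` together with all its in-neighbours,
out-neighbours and undirected neighbours. -/
def closedNbhd (G : MixedMultigraph) (u : G.V) : Set G.V :=
  {u} ∪ {v | ∃ e : G.E, (G.src e = u ∧ G.dst e = v) ∨ (G.src e = v ∧ G.dst e = u)}

/-- A subgraph: a subset of the vertices together with a subset of the edges
having both endpoints in that vertex subset. -/
structure Subgraph (G : MixedMultigraph) where
  verts : Finset G.V
  edges : Finset G.E
  src_mem : ∀ e ∈ edges, G.src e ∈ verts
  dst_mem : ∀ e ∈ edges, G.dst e ∈ verts

/-- A subgraph viewed as a mixed multigraph in its own right. -/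
def Subgraph.toGraph {G : MixedMultigraph} (H : G.Subgraph) : MixedMultigraph :=
  { V := {v : G.V // v ∈ H.verts}
    E := {e : G.E // e ∈ H.edges}
    fintV := FinsetCoe.fintype _
    fintE := FinsetCoe.fintype _
    src := fun e => ⟨G.src e.1, H.src_mem e.1 e.2⟩
    dst := fun e => ⟨G.dst e.1, H.dst_mem e.1 e.2⟩
    directed := fun e => G.directed e.1 }

end MixedMultigraph

namespace MixedMultigraph

variable {G : MixedMultigraph}

namespace Walk

/-- Concatenation of walks. -/
def append : {u v w : G.V} → G.Walk u v → G.Walk v w → G.Walk u w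
  | _, _, _, .nil _, q => q
  | _, _, _, .cons d p, q => .cons d (p.append q)

lemma length_append {u v w : G.V} (p : G.Walk u v) (q : G.Walk v w) :
    (p.append q).length = p.length + q.length := by
  induction p with
  | nil u => simp [append, length]
  | cons d t ih => simp only [append, length, ih]; omega

lemma support_eq_cons {u v : G.V} (p : G.Walk u v) : ∃ l, p.support = u :: l := by
  cases p <;> exact ⟨_, rfl⟩

lemma start_mem_support {u v : G.V} (p : G.Walk u v) : u ∈ p.support := by
  obtain ⟨l, hl⟩ := support_eq_cons p
  rw [hl]; exact List.mem_cons_self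

lemma edges_eq_darts {u v : G.V} (p : G.Walk u v) : p.edges = p.darts.map Dart.edge := by
  induction p with
  | nil u => rfl
  | cons d t ih => simp [edges, darts, ih]

lemma dart_snd_mem_support_tail {u v : G.V} (p : G.Walk u v) {d : G.Dart}
    (hd : d ∈ p.darts) : d.snd ∈ p.support.tail := by
  induction p with
  | nil u => simp [darts] at hd
  | cons d₀ t ih =>
    rw [show (Walk.cons d₀ t).darts = d₀ :: t.darts from rfl] at hd
    rw [show (Walk.cons d₀ t).support.tail = t.support from rfl]
    rcases List.mem_cons.mp hd with rfl | hd'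
    · exact start_mem_support t
    · exact List.mem_of_mem_tail (ih hd')

lemma dart_snd_eq {d d' : G.Dart} (h : d'.edge = d.edge) :
    d'.snd = d.fst ∨ d'.snd = d.snd := by
  simp only [Dart.fst, Dart.snd, h]
  cases hb : d.rev <;> cases hb' : d'.rev <;> simp

lemma IsPath.edges_nodup {u v : G.V} {p : G.Walk u v} (hp : p.IsPath) : p.edges.Nodup := by
  induction p with
  | nil u => simp [edges]
  | cons d t ih =>
    rw [IsPath, show (Walk.cons d t).support = d.fst :: t.support from rfl,
      List.nodup_cons] at hp
    obtain ⟨hdf, hts⟩ := hp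
    rw [show (Walk.cons d t).edges = d.edge :: t.edges from rfl, List.nodup_cons]
    refine ⟨fun hmem => ?_, ih hts⟩
    rw [edges_eq_darts] at hmem
    obtain ⟨d', hd', he⟩ := List.mem_map.mp hmem
    have h2 := dart_snd_mem_support_tail t hd'
    rcases dart_snd_eq he with h | h
    · exact hdf (h ▸ List.mem_of_mem_tail h2)
    · obtain ⟨l, hl⟩ := support_eq_cons t
      rw [hl] at hts h2
      simp only [List.tail_cons] at h2
      rw [h] at h2
      exact (List.nodup_cons.mp hts).1 h2

lemma exists_drop {u v x : G.V} (p : G.Walk u v) (hx : x ∈ p.support) :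
    ∃ q : G.Walk x v, q.support <:+ p.support ∧ (∀ a ∈ q.edges, a ∈ p.edges) ∧
      q.length ≤ p.length := by
  induction p with
  | nil u =>
    rw [show (Walk.nil u : G.Walk u u).support = [u] from rfl] at hx
    rcases List.mem_singleton.mp hx with rfl
    exact ⟨.nil x, List.suffix_refl _, fun a ha => ha, le_refl _⟩
  | cons d t ih =>
    rw [show (Walk.cons d t).support = d.fst :: t.support from rfl] at hx
    by_cases h : x ∈ t.support
    · obtain ⟨q, hs, he, hl⟩ := ih h
      refine ⟨q, hs.trans (List.suffix_cons _ _), fun a ha => ?_, ?_⟩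
      · rw [show (Walk.cons d t).edges = d.edge :: t.edges from rfl]
        exact List.mem_cons_of_mem _ (he a ha)
      · rw [show (Walk.cons d t).length = t.length + 1 from rfl]; omega
    · have hx' : x = d.fst := by
        rcases List.mem_cons.mp hx with h' | h'
        · exact h'
        · exact absurd h' h
      subst hx'
      exact ⟨.cons d t, List.suffix_refl _, fun a ha => ha, le_refl _⟩

lemma exists_path {u v : G.V} (p : G.Walk u v) :
    ∃ q : G.Walk u v, q.IsPath ∧ q.length ≤ p.length ∧ ∀ a ∈ q.edges, a ∈ p.edges := by
  induction p with
  | nil u => exact ⟨.nil u, by simp [IsPath, support], le_refl _, fun a ha => ha⟩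
  | cons d t ih =>
    obtain ⟨q, hq, hl, he⟩ := ih
    by_cases hmem : d.fst ∈ q.support
    · obtain ⟨q', hs, he', hl'⟩ := exists_drop q hmem
      refine ⟨q', ?_, ?_, fun a ha => ?_⟩
      · exact hq.sublist hs.sublist
      · rw [show (Walk.cons d t).length = t.length + 1 from rfl]; omega
      · rw [show (Walk.cons d t).edges = d.edge :: t.edges from rfl]
        exact List.mem_cons_of_mem _ (he a (he' a ha))
    · refine ⟨.cons d q, ?_, ?_, fun a ha => ?_⟩
      · rw [IsPath, show (Walk.cons d q).support = d.fst :: q.support from rfl]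
        exact List.nodup_cons.mpr ⟨hmem, hq⟩
      · rw [show (Walk.cons d q).length = q.length + 1 from rfl,
          show (Walk.cons d t).length = t.length + 1 from rfl]; omega
      · rw [show (Walk.cons d q).edges = d.edge :: q.edges from rfl] at ha
        rw [show (Walk.cons d t).edges = d.edge :: t.edges from rfl]
        rcases List.mem_cons.mp ha with rfl | ha'
        · exact List.mem_cons_self
        · exact List.mem_cons_of_mem _ (he a ha')

lemma exists_truncate {K : MixedMultigraph} {u v : K.V} (p : K.Walk u v) (k : ℕ)
    (hk : k ≤ p.length) :
    ∃ (w : K.V) (p₁ : K.Walk u w) (p₂ : K.Walk w v),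
      p₁.length = k ∧ p₂.length + k = p.length := by
  induction p generalizing k with
  | nil u =>
    have : k = 0 := Nat.le_zero.mp hk
    subst this
    exact ⟨u, .nil u, .nil u, rfl, rfl⟩
  | cons d t ih =>
    cases k with
    | zero => exact ⟨d.fst, .nil d.fst, .cons d t, rfl, rfl⟩
    | succ k' =>
      have hk' : k' ≤ t.length := by
        rw [show (Walk.cons d t).length = t.length + 1 from rfl] at hk; omega
      obtain ⟨w, t₁, t₂, h1, h2⟩ := ih k' hk'
      refine ⟨w, .cons d t₁, t₂, ?_, ?_⟩
      · rw [show (Walk.cons d t₁).length = t₁.length + 1 from rfl]; omega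
      · rw [show (Walk.cons d t).length = t.length + 1 from rfl]; omega

lemma exists_split (e : G.E) {u v : G.V} (p : G.Walk u v) (hn : p.edges.Nodup)
    (he : e ∈ p.edges) :
    ∃ (d : G.Dart) (p₁ : G.Walk u d.fst) (p₂ : G.Walk d.snd v),
      d.edge = e ∧ e ∉ p₁.edges ∧ e ∉ p₂.edges ∧
      p₁.length + p₂.length + 1 = p.length := by
  induction p with
  | nil u => simp [edges] at he
  | cons d₀ t ih =>
    rw [show (Walk.cons d₀ t).edges = d₀.edge :: t.edges from rfl,
      List.nodup_cons] at hn
    rw [show (Walk.cons d₀ t).edges = d₀.edge :: t.edges from rfl] at he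
    rcases List.mem_cons.mp he with heq | hmem
    · refine ⟨d₀, .nil _, t, heq.symm, by simp [edges], fun h => hn.1 (heq ▸ h), ?_⟩
      show (Walk.nil d₀.fst : G.Walk d₀.fst d₀.fst).length + t.length + 1 = t.length + 1
      simp only [length]; omega
    · obtain ⟨d, p₁, p₂, h1, h2, h3, h4⟩ := ih hn.2 hmem
      have hne : e ≠ d₀.edge := fun h => hn.1 (h ▸ hmem)
      refine ⟨d, .cons d₀ p₁, p₂, h1, ?_, h3, ?_⟩
      · rw [show (Walk.cons d₀ p₁).edges = d₀.edge :: p₁.edges from rfl]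
        intro h
        rcases List.mem_cons.mp h with h' | h'
        · exact hne h'
        · exact h2 h'
      · rw [show (Walk.cons d₀ p₁).length = p₁.length + 1 from rfl,
          show (Walk.cons d₀ t).length = t.length + 1 from rfl]; omega

lemma cast_end {u a b : G.V} (h : a = b) (q : G.Walk u a) :
    ∃ q' : G.Walk u b, q'.length = q.length ∧ q'.edges = q.edges := by
  subst h; exact ⟨q, rfl, rfl⟩

end Walk

/-- Walks avoiding `e` transfer to the edge-deleted graph. -/
lemma toDel (e : G.E) {u v : G.V} (p : G.Walk u v) (he : e ∉ p.edges) :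
    ∃ q : (G.deleteEdge e).Walk u v, q.length = p.length := by
  induction p with
  | nil u => exact ⟨Walk.nil (G := G.deleteEdge e) u, rfl⟩
  | cons d t ih =>
    rw [show (Walk.cons d t).edges = d.edge :: t.edges from rfl] at he
    have h1 : e ≠ d.edge := fun h => he (h ▸ List.mem_cons_self)
    have h2 : e ∉ t.edges := fun h => he (List.mem_cons_of_mem _ h)
    obtain ⟨q, hq⟩ := ih h2
    refine ⟨Walk.cons (⟨⟨d.edge, fun h => h1 h.symm⟩, d.rev, d.ok⟩ :
      (G.deleteEdge e).Dart) q, ?_⟩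
    show q.length + 1 = t.length + 1
    omega

/-- Identity on vertices of the edge-deleted graph, viewed in `G`. -/
@[reducible] def trDel (G : MixedMultigraph) (e : G.E) (a : (G.deleteEdge e).V) : G.V := a

lemma fromDelAux (e : G.E) {u v : (G.deleteEdge e).V} (q : (G.deleteEdge e).Walk u v) :
    ∃ p : G.Walk (trDel G e u) (trDel G e v), p.length = q.length ∧ e ∉ p.edges := by
  induction q with
  | nil u => exact ⟨Walk.nil (trDel G e u), rfl, by simp [Walk.edges]⟩
  | cons d t ih =>
    obtain ⟨p, hl, he⟩ := ih
    refine ⟨Walk.cons (⟨d.edge.1, d.rev, d.ok⟩ : G.Dart) p, ?_, ?_⟩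
    · show p.length + 1 = t.length + 1
      omega
    · show e ∉ d.edge.1 :: p.edges
      intro h
      rcases List.mem_cons.mp h with h' | h'
      · exact d.edge.2 h'.symm
      · exact he h'

/-- Walks in the edge-deleted graph transfer back, avoiding `e`. -/
lemma fromDel (e : G.E) {u v : G.V} (q : (G.deleteEdge e).Walk u v) :
    ∃ p : G.Walk u v, p.length = q.length ∧ e ∉ p.edges :=
  fromDelAux e q

lemma dist_le {K : MixedMultigraph} {u v : K.V} (p : K.Walk u v) :
    K.dist u v ≤ p.length :=
  Nat.sInf_le ⟨p, rfl⟩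

lemma exists_walk_of_dist {K : MixedMultigraph} (h : K.StronglyConnected) (u v : K.V) :
    ∃ p : K.Walk u v, p.length = K.dist u v := by
  have hne : {n | ∃ p : K.Walk u v, p.length = n}.Nonempty :=
    ⟨(h u v).some.length, (h u v).some, rfl⟩
  exact Nat.sInf_mem hne

lemma exists_center (G : MixedMultigraph) (v₀ : G.V) :
    ∃ c : G.V, ∀ v, G.dist c v ≤ G.radius ∧ G.dist v c ≤ G.radius := by
  have hne : {n | ∃ u : G.V, n = G.ecc u}.Nonempty := ⟨G.ecc v₀, v₀, rfl⟩
  have hmem : G.radius ∈ {n | ∃ u : G.V, n = G.ecc u} := Nat.sInf_mem hne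
  obtain ⟨c, hc⟩ := hmem
  refine ⟨c, fun v => ?_⟩
  have hfin : {n | ∃ w : G.V, n = max (G.dist c w) (G.dist w c)}
      = Set.range (fun w : G.V => max (G.dist c w) (G.dist w c)) := by
    ext n; simp [Set.mem_range, eq_comm]
  have hb : BddAbove {n | ∃ w : G.V, n = max (G.dist c w) (G.dist w c)} := by
    rw [hfin]; exact (Set.finite_range _).bddAbove
  have hle : max (G.dist c v) (G.dist v c) ≤ G.ecc c := le_csSup hb ⟨v, rfl⟩
  rw [← hc] at hle
  exact ⟨le_trans (le_max_left _ _) hle, le_trans (le_max_right _ _) hle⟩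

/-- Key decomposition: a `G`-distance bound yields deleted-graph distance bounds. -/
lemma master (e : G.E) {u v : G.V} (r : ℕ) (hSC : G.StronglyConnected)
    (h : G.dist u v ≤ r) :
    (G.deleteEdge e).dist u v ≤ r ∨
    ((G.deleteEdge e).dist u (G.src e) + (G.deleteEdge e).dist (G.dst e) v + 1 ≤ r) ∨
    ((G.deleteEdge e).dist u (G.dst e) + (G.deleteEdge e).dist (G.src e) v + 1 ≤ r) := by
  obtain ⟨w, hw⟩ := exists_walk_of_dist hSC u v
  obtain ⟨p, hp, hpl, hpe⟩ := Walk.exists_path w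
  have hplr : p.length ≤ r := by omega
  by_cases hme : e ∈ p.edges
  · obtain ⟨d, p₁, p₂, hde, h1, h2, h3⟩ := Walk.exists_split e p hp.edges_nodup hme
    obtain ⟨q₁, hq₁⟩ := toDel e p₁ h1
    obtain ⟨q₂, hq₂⟩ := toDel e p₂ h2
    obtain ⟨n₁, hn₁⟩ : ∃ n, n = p₁.length := ⟨_, rfl⟩
    obtain ⟨n₂, hn₂⟩ : ∃ n, n = p₂.length := ⟨_, rfl⟩
    have b₁ : (G.deleteEdge e).dist u d.fst ≤ n₁ := by
      rw [hn₁, ← hq₁]; exact dist_le q₁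
    have b₂ : (G.deleteEdge e).dist d.snd v ≤ n₂ := by
      rw [hn₂, ← hq₂]; exact dist_le q₂
    have hsum : n₁ + n₂ + 1 ≤ r := by omega
    cases hrev : d.rev with
    | false =>
      have hf : d.fst = G.src e := by simp [Dart.fst, hrev, hde]
      have hs : d.snd = G.dst e := by simp [Dart.snd, hrev, hde]
      rw [hf] at b₁; rw [hs] at b₂
      right; left; omega
    | true =>
      have hf : d.fst = G.dst e := by simp [Dart.fst, hrev, hde]
      have hs : d.snd = G.src e := by simp [Dart.snd, hrev, hde]
      rw [hf] at b₁; rw [hs] at b₂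
      right; right; omega
  · obtain ⟨q, hq⟩ := toDel e p hme
    left
    have := dist_le q
    omega

/-- Assemble a cycle from an `e`-free return walk (using `e` forwards). -/
lemma cycle_of_walk_fwd {e : G.E} {L : ℕ}
    (h : ∃ w : G.Walk (G.dst e) (G.src e), e ∉ w.edges ∧ w.length ≤ L) :
    G.EdgeOnCycleLE e (L + 1) := by
  obtain ⟨w, hwe, hwl⟩ := h
  obtain ⟨q, hq, hql, hqe⟩ := Walk.exists_path w
  have hqe' : e ∉ q.edges := fun hh => hwe (hqe e hh)
  refine ⟨G.src e, .cons ⟨e, false, fun hh => Bool.noConfusion hh⟩ q, ⟨?_, ?_, ?_⟩, ?_, ?_⟩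
  · show 0 < q.length + 1
    omega
  · show (e :: q.edges).Nodup
    exact List.nodup_cons.mpr ⟨hqe', hq.edges_nodup⟩
  · show q.support.Nodup
    exact hq
  · show e ∈ e :: q.edges
    exact List.mem_cons_self
  · show q.length + 1 ≤ L + 1
    omega

/-- Assemble a cycle from an `e`-free return walk (using `e` backwards). -/
lemma cycle_of_walk_rev {e : G.E} (hund : G.directed e = false) {L : ℕ}
    (h : ∃ w : G.Walk (G.src e) (G.dst e), e ∉ w.edges ∧ w.length ≤ L) :
    G.EdgeOnCycleLE e (L + 1) := by
  obtain ⟨w, hwe, hwl⟩ := h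
  obtain ⟨q, hq, hql, hqe⟩ := Walk.exists_path w
  have hqe' : e ∉ q.edges := fun hh => hwe (hqe e hh)
  refine ⟨G.dst e, .cons ⟨e, true, fun _ => hund⟩ q, ⟨?_, ?_, ?_⟩, ?_, ?_⟩
  · show 0 < q.length + 1
    omega
  · show (e :: q.edges).Nodup
    exact List.nodup_cons.mpr ⟨hqe', hq.edges_nodup⟩
  · show q.support.Nodup
    exact hq
  · show e ∈ e :: q.edges
    exact List.mem_cons_self
  · show q.length + 1 ≤ L + 1
    omega

end MixedMultigraph

open MixedMultigraph in
/-- in a strongly connected bridgeless mixed multigraph of radius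
`r`, every edge lies on a cycle of length at most `2r + 1`. -/
theorem edge_on_short_cycle (G : MixedMultigraph) (hSC : G.StronglyConnected)
    (hB : G.Bridgeless) (r : ℕ) (hrad : G.radius = r) (e : G.E) :
    G.EdgeOnCycleLE e (2 * r + 1) := by
  classical
  obtain ⟨c, hc⟩ := exists_center G (G.src e)
  rw [hrad] at hc
  by_cases hdir : G.directed e = true
  · -- directed edge: a shortest walk dst e ⇝ src e through the centre,
    -- turned into a path, is `e`-free (or its prefix before `e` is).
    have hret : ∃ w : G.Walk (G.dst e) (G.src e), e ∉ w.edges ∧ w.length ≤ 2 * r := by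
      obtain ⟨w₁, h₁⟩ := exists_walk_of_dist hSC (G.dst e) c
      obtain ⟨w₂, h₂⟩ := exists_walk_of_dist hSC c (G.src e)
      obtain ⟨p, hp, hpl, hpe⟩ := Walk.exists_path (w₁.append w₂)
      have h3 := Walk.length_append w₁ w₂
      have h4 := (hc (G.dst e)).2
      have h5 := (hc (G.src e)).1
      have hplr : p.length ≤ 2 * r := by omega
      by_cases hme : e ∈ p.edges
      · obtain ⟨d, p₁, p₂, hde, hh1, hh2, hh3⟩ := Walk.exists_split e p hp.edges_nodup hme
        have hrev : d.rev = false := by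
          cases hr : d.rev
          · rfl
          · have := d.ok hr
            rw [hde, hdir] at this
            exact Bool.noConfusion this
        have hf : d.fst = G.src e := by simp [Dart.fst, hrev, hde]
        obtain ⟨p₁', hL, hE⟩ := Walk.cast_end hf p₁
        exact ⟨p₁', by rw [hE]; exact hh1, by omega⟩
      · exact ⟨p, hme, hplr⟩
    exact cycle_of_walk_fwd hret
  · -- undirected edge
    have hund : G.directed e = false := by simpa using hdir
    have hH : (G.deleteEdge e).StronglyConnected := hB e hund
    have htri : ∀ a b c' : G.V, (G.deleteEdge e).dist a c' ≤
        (G.deleteEdge e).dist a b + (G.deleteEdge e).dist b c' := by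
      intro a b c'
      obtain ⟨w₁, h₁⟩ := exists_walk_of_dist hH a b
      obtain ⟨w₂, h₂⟩ := exists_walk_of_dist hH b c'
      have hd := dist_le (w₁.append w₂)
      have hl := Walk.length_append w₁ w₂
      omega
    have hgoal : (G.deleteEdge e).dist (G.dst e) (G.src e) ≤ 2 * r ∨
        (G.deleteEdge e).dist (G.src e) (G.dst e) ≤ 2 * r := by
      have e1 := master e r hSC (hc (G.dst e)).1
      have e2 := master e r hSC (hc (G.src e)).1
      have e3 := master e r hSC (hc (G.dst e)).2
      have e4 := master e r hSC (hc (G.src e)).2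
      by_cases hβ : (G.deleteEdge e).dist (G.dst e) c ≤ r
      · by_cases hγ : (G.deleteEdge e).dist c (G.src e) ≤ r
        · left; have := htri (G.dst e) c (G.src e); omega
        · rcases e2 with h | h | h
          · exact absurd h hγ
          · left; omega
          · -- h : D c (dst e) + D (src e) (src e) + 1 ≤ r, so δ ≤ r - 1
            by_cases hα : (G.deleteEdge e).dist (G.src e) c ≤ r
            · right; have := htri (G.src e) c (G.dst e); omega
            · rcases e4 with h4 | h4 | h4
              · exact absurd h4 hα
              · -- x-trapped: γ > r, α > r, δ ≤ r-1, β ≤ r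
                obtain ⟨W, hW⟩ := exists_walk_of_dist hH c (G.src e)
                have hγ1 : r + 1 ≤ W.length := by omega
                obtain ⟨u, w₁, w₂, hk, hsum⟩ := Walk.exists_truncate W (r + 1) hγ1
                have hb1 : (G.deleteEdge e).dist c u ≤ r + 1 := by
                  have := dist_le w₁; omega
                have hb2 : (G.deleteEdge e).dist u (G.src e) + (r + 1) ≤
                    (G.deleteEdge e).dist c (G.src e) := by
                  have := dist_le w₂; omega
                have hb3 : ¬ ((G.deleteEdge e).dist c u ≤ r) := by
                  intro hcu
                  have := htri c u (G.src e)
                  omega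
                have e5 := master e r hSC (hc u).1
                have e6 := master e r hSC (hc u).2
                have h5 : (G.deleteEdge e).dist c (G.dst e) +
                    (G.deleteEdge e).dist (G.src e) u + 1 ≤ r := by
                  rcases e5 with h5 | h5 | h5
                  · exact absurd h5 hb3
                  · omega
                  · exact h5
                rcases e6 with h6 | h6 | h6
                · right
                  have t1 := htri (G.src e) u (G.dst e)
                  have t2 := htri u c (G.dst e)
                  omega
                · left
                  have t1 := htri (G.dst e) c (G.src e)
                  have t2 := htri c u (G.src e)
                  omega
                · omega
              · right; omega
      · rcases e3 with h | h | h
        · exact absurd h hβ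
        · left; omega
        · -- h : D (dst e)(dst e) + D (src e) c + 1 ≤ r, so α ≤ r-1
          by_cases hδ : (G.deleteEdge e).dist c (G.dst e) ≤ r
          · right; have := htri (G.src e) c (G.dst e); omega
          · rcases e1 with h1 | h1 | h1
            · exact absurd h1 hδ
            · -- y-trapped: β > r, δ > r, α ≤ r-1, γ ≤ r-1
              obtain ⟨W, hW⟩ := exists_walk_of_dist hH c (G.dst e)
              have hδ1 : r + 1 ≤ W.length := by omega
              obtain ⟨u, w₁, w₂, hk, hsum⟩ := Walk.exists_truncate W (r + 1) hδ1
              have hb1 : (G.deleteEdge e).dist c u ≤ r + 1 := by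
                have := dist_le w₁; omega
              have hb2 : (G.deleteEdge e).dist u (G.dst e) + (r + 1) ≤
                  (G.deleteEdge e).dist c (G.dst e) := by
                have := dist_le w₂; omega
              have hb3 : ¬ ((G.deleteEdge e).dist c u ≤ r) := by
                intro hcu
                have := htri c u (G.dst e)
                omega
              have e5 := master e r hSC (hc u).1
              have e6 := master e r hSC (hc u).2
              have h5 : (G.deleteEdge e).dist c (G.src e) +
                  (G.deleteEdge e).dist (G.dst e) u + 1 ≤ r := by
                rcases e5 with h5 | h5 | h5
                · exact absurd h5 hb3
                · exact h5
                · omega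
              rcases e6 with h6 | h6 | h6
              · left
                have t1 := htri (G.dst e) u (G.src e)
                have t2 := htri u c (G.src e)
                omega
              · omega
              · right
                have t1 := htri (G.src e) u (G.dst e)
                have t2 := htri (G.src e) c u
                omega
            · omega
    rcases hgoal with hg | hg
    · obtain ⟨w, hw⟩ := exists_walk_of_dist hH (G.dst e) (G.src e)
      obtain ⟨p, hpl, hpe⟩ := fromDel e w
      exact cycle_of_walk_fwd ⟨p, hpe, by omega⟩
    · obtain ⟨w, hw⟩ := exists_walk_of_dist hH (G.src e) (G.dst e)
      obtain ⟨p, hpl, hpe⟩ := fromDel e w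
      exact cycle_of_walk_rev hund ⟨p, hpe, by omega⟩
end

section
/- Let n and k be natural numbers, let S₁ = {2i − 1 : 1 ≤ i ≤ n} be the set of the first n odd numbers, and let S₂ be a multiset consisting of k copies of a single value c, where c = 2n − 1 or c = 2n. Then the multiset S = S₁ ∪ S₂ can be partitioned into two multisets A and B such that |Σ_{a∈A} a − Σ_{b∈B} b| ≤ 2. -/
/-- The multiset of the first `n` odd numbers. -/
def O (n : ℕ) : Multiset ℕ := (Finset.Icc 1 n).val.map (fun i => 2 * i - 1)

lemma O_zero : O 0 = 0 := by
  simp [O]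

lemma O_succ (n : ℕ) : O (n + 1) = (2 * n + 1) ::ₘ O n := by
  unfold O
  rw [← Finset.insert_Icc_right_eq_Icc_add_one (by omega : 1 ≤ n + 1),
    Finset.insert_val_of_notMem (by simp), Multiset.map_cons]
  congr 1

lemma O_sum (n : ℕ) : (O n).sum = n ^ 2 := by
  induction n with
  | zero => simp [O_zero]
  | succ n ih =>
    rw [O_succ, Multiset.sum_cons, ih]
    ring

lemma O_mono {a b : ℕ} (h : a ≤ b) : O a ≤ O b := by
  exact Multiset.map_le_map (Finset.val_le_iff.mpr (Finset.Icc_subset_Icc_right h))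

lemma key (n : ℕ) : ∀ m ≤ n ^ 2, ∃ A : Multiset ℕ, A ≤ O n ∧ A.sum ≤ m ∧ m ≤ A.sum + 1 := by
  induction n with
  | zero =>
    intro m hm
    refine ⟨0, le_refl _, by simp, by simp; omega⟩
  | succ n ih =>
    intro m hm
    by_cases h1 : m ≤ n ^ 2
    · obtain ⟨A, hA, hs1, hs2⟩ := ih m h1
      exact ⟨A, hA.trans (O_mono (Nat.le_succ n)), hs1, hs2⟩
    by_cases h2 : 2 * n + 1 ≤ m
    · have hexp : (n + 1) ^ 2 = n ^ 2 + (2 * n + 1) := by ring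
      have hm' : m - (2 * n + 1) ≤ n ^ 2 := by
        rw [tsub_le_iff_right]
        rw [hexp] at hm
        linarith
      obtain ⟨A, hA, hs1, hs2⟩ := ih (m - (2 * n + 1)) hm'
      refine ⟨(2 * n + 1) ::ₘ A, ?_, ?_, ?_⟩
      · rw [O_succ]
        exact Multiset.cons_le_cons _ hA
      · rw [Multiset.sum_cons]
        omega
      · rw [Multiset.sum_cons]
        omega
    · -- n^2 < m < 2n+1 : forces n = 1, m = 2
      have hn2 : n ^ 2 = n * n := by ring
      have hn : n ≤ 2 := by nlinarith
      interval_cases n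
      · norm_num at h1 h2
        omega
      · have hm2 : m = 2 := by norm_num at h1 h2 ⊢; omega
        refine ⟨O 1, O_mono (by norm_num), ?_, ?_⟩ <;>
          rw [O_sum] <;> norm_num [hm2]
      · norm_num at h1 h2
        omega

lemma choose_j (c N : ℕ) (hc : c ≤ N + 1) :
    ∀ k t, t ≤ k * c + N → ∃ j ≤ k, j * c ≤ t ∧ t ≤ j * c + N := by
  intro k
  induction k with
  | zero => intro t ht; exact ⟨0, le_refl _, by simp, by simpa using ht⟩
  | succ k ih =>
    intro t ht
    by_cases h : t ≤ k * c + N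
    · obtain ⟨j, hj, h1, h2⟩ := ih t h
      exact ⟨j, hj.trans (Nat.le_succ k), h1, h2⟩
    · push_neg at h
      have hexp : (k + 1) * c = k * c + c := by ring
      refine ⟨k + 1, le_refl _, ?_, ?_⟩ <;> rw [hexp]
      · linarith
      · linarith

/-- the first `n` odd numbers together with `k` copies of a value
`c ∈ {2n − 1, 2n}` can be partitioned (as a multiset) into two multisets whose
sums differ by at most `2`. -/
theorem odd_numbers_multiset_partition (n k c : ℕ)
    (hc : c = 2 * n - 1 ∨ c = 2 * n) :
    ∃ A B : Multiset ℕ,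
      A + B = (Finset.Icc 1 n).val.map (fun i => 2 * i - 1) +
        Multiset.replicate k c ∧
      |(A.sum : ℤ) - (B.sum : ℤ)| ≤ 2 := by
  rcases Nat.eq_zero_or_pos n with hn | hn
  · subst hn
    have hc0 : c = 0 := by omega
    subst hc0
    exact ⟨Multiset.replicate k 0, 0, by simp, by simp⟩
  · have hc2 : c ≤ 2 * n := by omega
    have h2 : 2 * n ≤ n ^ 2 + 1 := by nlinarith
    have hc1 : c ≤ n ^ 2 + 1 := hc2.trans h2
    obtain ⟨T, hT⟩ : ∃ T, T = n ^ 2 + k * c := ⟨_, rfl⟩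
    set t := (T + 1) / 2 with htdef
    have htT : t ≤ T := by omega
    have ht : t ≤ k * c + n ^ 2 := by linarith
    obtain ⟨j, hjk, hjc, hup⟩ := choose_j c (n ^ 2) hc1 k t ht
    obtain ⟨m, hm⟩ : ∃ m, m + j * c = t := ⟨t - j * c, Nat.sub_add_cancel hjc⟩
    have hm2 : m ≤ n ^ 2 := by linarith
    obtain ⟨A₀, hA₀, hs1, hs2⟩ := key n m hm2
    set A : Multiset ℕ := A₀ + Multiset.replicate j c with hAdef
    set S : Multiset ℕ := O n + Multiset.replicate k c with hSdef
    have hle : A ≤ S :=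
      add_le_add hA₀ ((Multiset.replicate_le_replicate c).mpr hjk)
    set B : Multiset ℕ := S - A with hBdef
    have hAB : A + B = S := add_tsub_cancel_of_le hle
    refine ⟨A, B, hAB, ?_⟩
    have hSsum : S.sum = T := by
      rw [hSdef, Multiset.sum_add, O_sum, Multiset.sum_replicate, smul_eq_mul, hT]
    have hsum : A.sum + B.sum = T := by
      rw [← Multiset.sum_add, hAB, hSsum]
    have hAsum : A.sum = A₀.sum + j * c := by
      rw [hAdef, Multiset.sum_add, Multiset.sum_replicate, smul_eq_mul]
    have hA1 : A.sum ≤ t := by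
      rw [hAsum]; linarith
    have hA2 : t ≤ A.sum + 1 := by
      rw [hAsum]; linarith
    have h2t : 2 * t = T ∨ 2 * t = T + 1 := by omega
    rw [abs_le]
    constructor <;> omega
end
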